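/- arXiv:1304.5427 — 2 statements merged into one kernel-verified Lean document; each statement's English description precedes it below -/
import Mathlib

section
/- (Star Colouring Theorem) Consider the Petersen-star configuration: vertices u_1,...,u_5 with inner edges (u_i, u_{i+2}) for i in Z/5 (a 5-cycle on the u_i in pentagram order), and five outer pendant edges f_1,...,f_5 where f_i is incident to u_i, each f_i's other endpoint having degree 1. In any proper 3-edge-colouring of this graph by non-zero elements of Z/2 × Z/2 in which the outer edge colours sum to 0, some colour x appears on exactly three of the outer edges f_1,...,f_5, and the three x-coloured outer edges are not three consecutive edges f_i, f_{i+1}, f_{i+2} (indices mod 5). -/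
set_option maxRecDepth 40000

/-- A proper edge colouring: distinct edges of the graph sharing a vertex get distinct colours. -/
def IsProperEdgeColoring {V C : Type*} (G : SimpleGraph V) (f : Sym2 V → C) : Prop :=
  ∀ e₁ ∈ G.edgeSet, ∀ e₂ ∈ G.edgeSet, e₁ ≠ e₂ → (∃ v, v ∈ e₁ ∧ v ∈ e₂) → f e₁ ≠ f e₂

lemma key5 : ∀ b0 b1 b2 b3 b4 : ZMod 2 × ZMod 2,
    (∀ i, ![b0,b1,b2,b3,b4] i ≠ 0) → (∀ i, ![b0,b1,b2,b3,b4] i ≠ ![b0,b1,b2,b3,b4] (i + 2)) →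
    ∃ x : ZMod 2 × ZMod 2, x ≠ 0 ∧
      (Finset.univ.filter (fun i => ![b0,b1,b2,b3,b4] i + ![b0,b1,b2,b3,b4] (i + 3) = x)).card = 3 ∧
      ¬ ∃ i : Fin 5, ![b0,b1,b2,b3,b4] i + ![b0,b1,b2,b3,b4] (i + 3) = x ∧
        ![b0,b1,b2,b3,b4] (i + 1) + ![b0,b1,b2,b3,b4] (i + 1 + 3) = x ∧
        ![b0,b1,b2,b3,b4] (i + 2) + ![b0,b1,b2,b3,b4] (i + 2 + 3) = x := by decide

lemma key (b : Fin 5 → ZMod 2 × ZMod 2) (h1 : ∀ i, b i ≠ 0) (h2 : ∀ i, b i ≠ b (i + 2)) :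
    ∃ x : ZMod 2 × ZMod 2, x ≠ 0 ∧
      (Finset.univ.filter (fun i => b i + b (i + 3) = x)).card = 3 ∧
      ¬ ∃ i : Fin 5, b i + b (i + 3) = x ∧ b (i + 1) + b (i + 1 + 3) = x ∧
        b (i + 2) + b (i + 2 + 3) = x := by
  have hb : b = ![b 0, b 1, b 2, b 3, b 4] := by
    funext i; fin_cases i <;> rfl
  rw [hb] at h1 h2 ⊢
  exact key5 _ _ _ _ _ h1 h2

lemma triple_sum : ∀ x y z : ZMod 2 × ZMod 2, x ≠ 0 → y ≠ 0 → z ≠ 0 →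
    x ≠ y → x ≠ z → y ≠ z → z = x + y := by decide

theorem stmt7 {V : Type*} [Fintype V] [DecidableEq V] (G : SimpleGraph V) [DecidableRel G.Adj]
    (u v : Fin 5 → V) (hu : Function.Injective u) (hv : Function.Injective v)
    (huv : ∀ i j, u i ≠ v j)
    (hinner : ∀ i, G.Adj (u i) (u (i + 2)))
    (houter : ∀ i, G.Adj (u i) (v i))
    (hdegu : ∀ i, G.degree (u i) = 3)
    (hdegv : ∀ i, G.degree (v i) = 1)
    (f : Sym2 V → ZMod 2 × ZMod 2) (hf : IsProperEdgeColoring G f)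
    (hnz : ∀ e ∈ G.edgeSet, f e ≠ 0)
    (hsum : ∑ i, f s(u i, v i) = 0) :
    ∃ x : ZMod 2 × ZMod 2, x ≠ 0 ∧
      (Finset.univ.filter (fun i => f s(u i, v i) = x)).card = 3 ∧
      ¬ ∃ i : Fin 5, f s(u i, v i) = x ∧ f s(u (i + 1), v (i + 1)) = x ∧
        f s(u (i + 2), v (i + 2)) = x := by
  set b : Fin 5 → ZMod 2 × ZMod 2 := fun i => f s(u i, u (i + 2)) with hbdef
  have hb0 : ∀ i, b i ≠ 0 := fun i => hnz _ (G.mem_edgeSet.mpr (hinner i))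
  have ha0 : ∀ i, f s(u i, v i) ≠ 0 := fun i => hnz _ (G.mem_edgeSet.mpr (houter i))
  have hbne : ∀ i : Fin 5, b i ≠ b (i + 2) := by
    intro i
    refine hf _ (G.mem_edgeSet.mpr (hinner i)) _ (G.mem_edgeSet.mpr (hinner (i + 2))) ?_
      ⟨u (i + 2), by simp, by simp⟩
    simp only [ne_eq, Sym2.eq_iff, hu.eq_iff, not_or, not_and_or]
    revert i; decide
  have hbne3 : ∀ i : Fin 5, b i ≠ b (i + 3) := by
    intro i
    have h32 : i + 3 + 2 = i := by revert i; decide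
    refine hf _ (G.mem_edgeSet.mpr (hinner i)) _ (G.mem_edgeSet.mpr (hinner (i + 3))) ?_
      ⟨u i, by simp, by rw [h32]; simp⟩
    simp only [ne_eq, Sym2.eq_iff, hu.eq_iff, h32, not_or, not_and_or]
    revert i; decide
  have ha : ∀ i : Fin 5, f s(u i, v i) = b i + b (i + 3) := by
    intro i
    have h32 : i + 3 + 2 = i := by revert i; decide
    refine triple_sum _ _ _ (hb0 i) (hb0 (i + 3)) (ha0 i) (hbne3 i) ?_ ?_
    · refine hf _ (G.mem_edgeSet.mpr (hinner i)) _ (G.mem_edgeSet.mpr (houter i)) ?_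
        ⟨u i, by simp, by simp⟩
      intro h
      rw [Sym2.eq_iff] at h
      rcases h with ⟨-, h⟩ | ⟨h, -⟩
      exacts [huv _ _ h, huv _ _ h]
    · refine hf _ (G.mem_edgeSet.mpr (hinner (i + 3))) _ (G.mem_edgeSet.mpr (houter i)) ?_
        ⟨u i, by rw [h32]; simp, by simp⟩
      intro h
      rw [Sym2.eq_iff, h32] at h
      rcases h with ⟨-, h⟩ | ⟨h, -⟩
      exacts [huv _ _ h, huv _ _ h]
  obtain ⟨x, hx, hcard, hcons⟩ := key b hb0 hbne
  refine ⟨x, hx, ?_, ?_⟩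
  · simpa only [ha] using hcard
  · simpa only [ha] using hcons
end

section
/- In a finite simple cubic graph that is cyclically 5-edge-connected, any 5-cycle Q and any hinge H (path with 2 edges) disjoint from Q are 5-edge-connected to each other: there exist five pairwise edge-disjoint paths each with one endpoint in Q and the other in H; equivalently, no set of at most 4 edges separates Q from H. -/
/-- `S` separates the vertex sets `A` and `B` in `G`: after deleting the edges of `S`,
`A` lies entirely in one component, `B` lies entirely in one component, and these
components are different. -/
def SeparatedBy {V : Type*} (G : SimpleGraph V) (A B : Set V) (S : Set (Sym2 V)) : Prop :=
  (∀ a ∈ A, ∀ b ∈ B, ¬ (G.deleteEdges S).Reachable a b) ∧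
  (∀ a ∈ A, ∀ a' ∈ A, (G.deleteEdges S).Reachable a a') ∧
  (∀ b ∈ B, ∀ b' ∈ B, (G.deleteEdges S).Reachable b b')

/-- `G` is cyclically 5-edge-connected: no two vertex-disjoint cycles can be separated
from each other by removing at most 4 edges. -/
def CyclicallyFiveEdgeConnected {V : Type*} (G : SimpleGraph V) : Prop :=
  ∀ (a b : V) (A : G.Walk a a) (B : G.Walk b b), A.IsCycle → B.IsCycle →
    (∀ w, w ∈ A.support → w ∉ B.support) →
    ∀ S : Finset (Sym2 V), S.card ≤ 4 →
      ¬ SeparatedBy G {w | w ∈ A.support} {w | w ∈ B.support} ↑S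

theorem stmt16 {V : Type*} [Fintype V] (G : SimpleGraph V) [DecidableRel G.Adj]
    (hcubic : ∀ v, G.degree v = 3) (hc5 : CyclicallyFiveEdgeConnected G)
    (q : V) (Q : G.Walk q q) (hQ : Q.IsCycle) (hQ5 : Q.length = 5)
    (v₁ v₂ v₃ : V) (h12 : G.Adj v₁ v₂) (h23 : G.Adj v₂ v₃) (h13 : v₁ ≠ v₃)
    (hd1 : v₁ ∉ Q.support) (hd2 : v₂ ∉ Q.support) (hd3 : v₃ ∉ Q.support) :
    ∀ S : Finset (Sym2 V), S.card ≤ 4 →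
      ¬ SeparatedBy G {w | w ∈ Q.support} {v₁, v₂, v₃} ↑S := by
  classical
  intro S hScard hsep
  obtain ⟨hsep1, hsep2, hsep3⟩ := hsep
  -- the component of the hinge after deleting S
  set K : Set V := {x | (G.deleteEdges ↑S).Reachable v₂ x} with hKdef
  have hK2 : v₂ ∈ K := SimpleGraph.Reachable.refl _
  have hK1 : v₁ ∈ K := hsep3 v₂ (by simp) v₁ (by simp)
  have hK3 : v₃ ∈ K := hsep3 v₂ (by simp) v₃ (by simp)
  have hQK : ∀ w ∈ Q.support, w ∉ K := by
    intro w hw hwK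
    exact hsep1 w hw v₂ (by simp) hwK.symm
  -- the crossing edges
  set S' : Finset (Sym2 V) :=
    S.filter (fun e => (∃ v ∈ e, v ∈ K) ∧ (∃ v ∈ e, v ∉ K)) with hS'def
  have hS'sub : (S' : Set (Sym2 V)) ⊆ (S : Set (Sym2 V)) := by
    intro e he
    simp only [hS'def, Finset.coe_filter, Set.mem_setOf_eq] at he
    exact he.1
  set G'' : SimpleGraph V := G.deleteEdges ↑S' with hG''def
  have hle : G.deleteEdges ↑S ≤ G'' := SimpleGraph.deleteEdges_anti hS'sub
  -- K is closed under G''-adjacency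
  have hclosed : ∀ x y, x ∈ K → G''.Adj x y → y ∈ K := by
    intro x y hx hxy
    rw [hG''def, SimpleGraph.deleteEdges_adj] at hxy
    obtain ⟨hadj, hnS'⟩ := hxy
    by_cases hes : s(x, y) ∈ (S : Set (Sym2 V))
    · by_contra hyK
      apply hnS'
      simp only [hS'def, Finset.coe_filter, Set.mem_setOf_eq]
      refine ⟨by exact_mod_cast hes, ⟨x, by simp, hx⟩, ⟨y, by simp, hyK⟩⟩
    · exact hx.trans (SimpleGraph.Adj.reachable (by rw [SimpleGraph.deleteEdges_adj]; exact ⟨hadj, hes⟩))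
  have hwalkK : ∀ x y (p : G''.Walk x y), x ∈ K → ∀ z ∈ p.support, z ∈ K := by
    intro x y p
    induction p with
    | nil => intro hx z hz; simp at hz; subst hz; exact hx
    | cons h p ih =>
      intro hx z hz
      rw [SimpleGraph.Walk.support_cons] at hz
      rcases List.mem_cons.mp hz with rfl | hz
      · exact hx
      · exact ih (hclosed _ _ hx h) z hz
  -- the induced graph on K
  set Gk : SimpleGraph K := G''.induce K with hGkdef
  have hGkadj : ∀ (a b : K), Gk.Adj a b ↔ G''.Adj ↑a ↑b := by
    intro a b; rfl
  -- reachability lifts into the induced graph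
  have hlift : ∀ x y (p : G''.Walk x y) (hx : x ∈ K) (hy : y ∈ K),
      Gk.Reachable ⟨x, hx⟩ ⟨y, hy⟩ := by
    intro x y p
    induction p with
    | nil => intro hx hy; exact SimpleGraph.Reachable.refl _
    | @cons x x' y h p ih =>
      intro hx hy
      have hx' : x' ∈ K := hclosed _ _ hx h
      exact (SimpleGraph.Adj.reachable (by rw [hGkadj]; exact h)).trans (ih hx' hy)
  have hGkconn : Gk.Connected := by
    rw [SimpleGraph.connected_iff]
    refine ⟨?_, ⟨⟨v₂, hK2⟩⟩⟩
    rintro ⟨a, ha⟩ ⟨b, hb⟩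
    have hra : G''.Reachable v₂ a := (SimpleGraph.Reachable.mono hle ha)
    have hrb : G''.Reachable v₂ b := (SimpleGraph.Reachable.mono hle hb)
    obtain ⟨pa⟩ := hra
    obtain ⟨pb⟩ := hrb
    exact (hlift _ _ pa hK2 ha).symm.trans (hlift _ _ pb hK2 hb)
  -- the finset of vertices of K
  set Kf : Finset V := K.toFinset with hKfdef
  have hKfmem : ∀ v, v ∈ Kf ↔ v ∈ K := by intro v; simp [hKfdef]
  have hKfcard3 : 3 ≤ Kf.card := by
    have hsub : {v₁, v₂, v₃} ⊆ Kf := by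
      intro x hx
      simp only [Finset.mem_insert, Finset.mem_singleton] at hx
      rcases hx with rfl | rfl | rfl <;> rw [hKfmem] <;> assumption
    calc 3 = ({v₁, v₂, v₃} : Finset V).card := by
            rw [Finset.card_insert_of_notMem (by simp [h12.ne, h13]),
              Finset.card_insert_of_notMem (by simp [h23.ne]), Finset.card_singleton]
      _ ≤ Kf.card := Finset.card_le_card hsub
  -- degree bound: each vertex of K keeps at least 3 - (incident crossing edges)
  have hdeg : ∀ v, 3 ≤ G''.degree v + (S'.filter (fun e => v ∈ e)).card := by
    intro v
    have hnb : G''.neighborFinset v =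
        (G.neighborFinset v).filter (fun w => s(v, w) ∉ (S' : Set (Sym2 V))) := by
      ext w
      simp [hG''def, SimpleGraph.deleteEdges_adj]
    have hsplit : ((G.neighborFinset v).filter (fun w => s(v, w) ∉ (S' : Set (Sym2 V)))).card
        + ((G.neighborFinset v).filter (fun w => ¬ s(v, w) ∉ (S' : Set (Sym2 V)))).card
        = (G.neighborFinset v).card :=
      Finset.card_filter_add_card_filter_not _
    have hinj : ((G.neighborFinset v).filter (fun w => ¬ s(v, w) ∉ (S' : Set (Sym2 V)))).card
        ≤ (S'.filter (fun e => v ∈ e)).card := by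
      apply Finset.card_le_card_of_injOn (fun w => s(v, w))
      · intro w hw
        simp only [Finset.mem_coe, Finset.mem_filter, SimpleGraph.mem_neighborFinset, not_not] at hw
        simp only [Finset.mem_coe, Finset.mem_filter]
        exact ⟨by exact_mod_cast hw.2, by simp⟩
      · intro a ha b hb hab
        exact (Sym2.congr_right).mp hab
    have hdv : G.degree v = 3 := hcubic v
    rw [SimpleGraph.degree, hnb]
    unfold SimpleGraph.degree at hdv
    omega
  -- total number of lost incidences is at most 4
  have hlost : ∑ v ∈ Kf, (S'.filter (fun e => v ∈ e)).card ≤ 4 := by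
    have hswap : ∑ v ∈ Kf, (S'.filter (fun e => v ∈ e)).card
        = ∑ e ∈ S', (Kf.filter (fun v => v ∈ e)).card := by
      simp_rw [Finset.card_filter]
      exact Finset.sum_comm
    rw [hswap]
    have hone : ∀ e ∈ S', (Kf.filter (fun v => v ∈ e)).card ≤ 1 := by
      intro e he
      simp only [hS'def, Finset.mem_filter] at he
      obtain ⟨-, ⟨a, hae, haK⟩, ⟨b, hbe, hbK⟩⟩ := he
      have hfsub : Kf.filter (fun v => v ∈ e) ⊆ {a} := by
        intro x hx
        simp only [Finset.mem_filter, hKfmem] at hx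
        have hxb : x ≠ b := fun h => hbK (h ▸ hx.1)
        have hxab : a ≠ b := fun h => hbK (h ▸ haK)
        have he1 : e = s(x, b) := (Sym2.mem_and_mem_iff hxb).mp ⟨hx.2, hbe⟩
        have he2 : e = s(a, b) := (Sym2.mem_and_mem_iff hxab).mp ⟨hae, hbe⟩
        have : x = a := Sym2.congr_left.mp (he1.symm.trans he2)
        simp [this]
      calc (Kf.filter (fun v => v ∈ e)).card ≤ ({a} : Finset V).card :=
            Finset.card_le_card hfsub
        _ = 1 := Finset.card_singleton a
    calc ∑ e ∈ S', (Kf.filter (fun v => v ∈ e)).card ≤ ∑ _e ∈ S', 1 :=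
          Finset.sum_le_sum hone
      _ = S'.card := by simp
      _ ≤ S.card := Finset.card_le_card (Finset.filter_subset _ _)
      _ ≤ 4 := hScard
  -- degree of induced graph equals degree in G''
  have hdegeq : ∀ (a : K), Gk.degree a = G''.degree (↑a : V) := by
    intro a
    unfold SimpleGraph.degree
    refine Finset.card_bij (fun b _ => (↑b : V)) ?_ ?_ ?_
    · intro b hb
      rw [SimpleGraph.mem_neighborFinset] at hb ⊢
      exact (hGkadj a b).mp hb
    · intro b hb b' hb' h
      exact Subtype.ext h
    · intro w hw
      rw [SimpleGraph.mem_neighborFinset] at hw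
      have hwK : w ∈ K := hclosed _ _ a.2 hw
      exact ⟨⟨w, hwK⟩, by rw [SimpleGraph.mem_neighborFinset, hGkadj]; exact hw, rfl⟩
  -- Gk contains a cycle
  have hcyc : ¬ Gk.IsAcyclic := by
    intro hacyc
    have htree : Gk.IsTree := ⟨hGkconn, hacyc⟩
    have hcard := htree.card_edgeFinset
    have hsum := Gk.sum_degrees_eq_twice_card_edges
    have hsum2 : ∑ a : K, Gk.degree a = ∑ v ∈ Kf, G''.degree v := by
      rw [Finset.sum_subtype Kf (fun x => (hKfmem x))]
      exact Finset.sum_congr rfl (fun a _ => hdegeq a)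
    have hcardK : Fintype.card K = Kf.card := Set.toFinset_card K |>.symm
    have hlow : 3 * Kf.card ≤ ∑ v ∈ Kf, G''.degree v
        + ∑ v ∈ Kf, (S'.filter (fun e => v ∈ e)).card := by
      rw [← Finset.sum_add_distrib]
      calc 3 * Kf.card = ∑ _v ∈ Kf, 3 := by rw [Finset.sum_const, smul_eq_mul, mul_comm]
        _ ≤ _ := Finset.sum_le_sum (fun v _ => hdeg v)
    rw [hsum2] at hsum
    omega
  simp only [SimpleGraph.IsAcyclic, not_forall, not_not] at hcyc
  obtain ⟨u, C, hC⟩ := hcyc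
  -- map the cycle into G'' and then into G
  set emb : Gk ↪g G'' := SimpleGraph.Embedding.induce K with hembdef
  set C2 : G''.Walk (↑u) (↑u) := C.map emb.toHom with hC2def
  have hC2cyc : C2.IsCycle := hC.map emb.injective
  set C' : G.Walk (↑u) (↑u) := C2.mapLe (SimpleGraph.deleteEdges_le _) with hC'def
  have hC'cyc : C'.IsCycle := hC2cyc.mapLe _
  have hC'supp : ∀ w, w ∈ C'.support ↔ w ∈ C2.support := by
    intro w
    rw [hC'def, SimpleGraph.Walk.mapLe, SimpleGraph.Walk.support_map]
    simp [SimpleGraph.Hom.ofLE_apply]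
  have hC2K : ∀ w ∈ C2.support, w ∈ K := by
    intro w hw
    have hw : w ∈ C.support.map emb.toHom := by rw [← SimpleGraph.Walk.support_map]; exact hw
    obtain ⟨z, hz, rfl⟩ := List.mem_map.mp hw
    exact z.2
  -- C' is disjoint from Q
  have hdisj : ∀ w, w ∈ Q.support → w ∉ C'.support := by
    intro w hw hwC
    exact hQK w hw (hC2K w ((hC'supp w).mp hwC))
  -- apply cyclic 5-edge-connectivity
  refine hc5 q (↑u) Q C' hQ hC'cyc hdisj S'
    (le_trans (Finset.card_le_card (Finset.filter_subset _ _)) hScard) ?_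
  refine ⟨?_, ?_, ?_⟩
  · intro a ha b hb hr
    have hbK : b ∈ K := hC2K b ((hC'supp b).mp hb)
    obtain ⟨p⟩ := hr.symm
    exact hQK a ha (hwalkK _ _ p hbK a (SimpleGraph.Walk.end_mem_support p))
  · intro a ha a' ha'
    exact SimpleGraph.Reachable.mono hle (hsep2 a ha a' ha')
  · intro b hb b' hb'
    have hreach : ∀ w (hw : w ∈ C2.support), G''.Reachable (↑u) w := by
      intro w hw
      exact ⟨C2.takeUntil w hw⟩
    exact (hreach b ((hC'supp b).mp hb)).symm.trans
      (hreach b' ((hC'supp b').mp hb'))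
end
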